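/- (Consistency of the entry theorem at m = 1.) Let Γ = [1/2; r_1; α] be a blockchain oceanic game with one major miner, where 0 ≤ r_1 < 1/2 ≤ α, and let Γ⁺ = [1/2; r_1, r_2; α] be obtained by adding a second major miner with weight r_2 > 0 such that r_1 + r_2 ≤ 1/2. Then the value of the entering miner in Γ⁺ satisfies φ⁺_2 = r_2·(α − r_1)/α², and consequently its value per unit of resource equals the oceanic value per unit of resource of the original game: φ⁺_2/r_2 = (α − r_1)/α² = Φ/α, where Φ = (α − r_1)/α is the oceanic value in Γ. -/

import Mathlib

open MeasureTheory Finset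

/-- The uniform probability measure on the unit cube `[0,1]^m`. -/
noncomputable def cubeMeasure (m : ℕ) : Measure (Fin m → ℝ) :=
  Measure.pi fun _ => volume.restrict (Set.Icc (0:ℝ) 1)

/-- The event that miner `i` is pivotal: with `r(x) = ∑_j r_j · 1{X_j < X_i}`,
`r(X_i) + α·X_i < q ≤ r(X_i) + α·X_i + r_i`. -/
def pivotEvent (m : ℕ) (q α : ℝ) (r : Fin m → ℝ) (i : Fin m) : Set (Fin m → ℝ) :=
  {x | (∑ j, if x j < x i then r j else 0) + α * x i < q ∧
       q ≤ (∑ j, if x j < x i then r j else 0) + α * x i + r i}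

/-- The value `φ_i` of major miner `i` in the blockchain oceanic game
`Γ = [q; r_1,…,r_m; α]`. -/
noncomputable def minerValue (m : ℕ) (q α : ℝ) (r : Fin m → ℝ) (i : Fin m) : ℝ :=
  (cubeMeasure m (pivotEvent m q α r i)).toReal

/-- The oceanic value `Φ = 1 - ∑_i φ_i`. -/
noncomputable def oceanicValue (m : ℕ) (q α : ℝ) (r : Fin m → ℝ) : ℝ :=
  1 - ∑ i, minerValue m q α r i

set_option maxHeartbeats 1000000 in
lemma one_dim (α r₁ : ℝ) (hr₁ : 0 ≤ r₁) (hr₁' : r₁ < 1 / 2) (hα : 1 / 2 ≤ α) :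
    minerValue 1 (1 / 2) α (fun _ => r₁) 0 = r₁ / α := by
  have hα0 : (0:ℝ) < α := lt_of_lt_of_le (by norm_num) hα
  set ν := volume.restrict (Set.Icc (0:ℝ) 1) with hν
  set c1 := (1/2 - r₁)/α with hc1
  set c2 := (1/2)/α with hc2
  have hpre : pivotEvent 1 (1/2) α (fun _ => r₁) 0
      = (MeasurableEquiv.funUnique (Fin 1) ℝ) ⁻¹' (Set.Ico c1 c2) := by
    ext x
    simp only [pivotEvent, Fin.sum_univ_one, lt_self_iff_false, if_false, zero_add,
      Set.mem_setOf_eq, Set.mem_preimage, MeasurableEquiv.funUnique_apply, Fin.default_eq_zero, Set.mem_Ico, hc1, hc2]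
    rw [div_le_iff₀ hα0, lt_div_iff₀ hα0]
    constructor <;> rintro ⟨h1, h2⟩ <;> constructor <;> nlinarith [h1, h2]
  have key : cubeMeasure 1 (pivotEvent 1 (1/2) α (fun _ => r₁) 0) = ν (Set.Ico c1 c2) := by
    rw [hpre]
    exact (measurePreserving_funUnique ν (Fin 1)).measure_preimage_equiv _
  have hval : ν (Set.Ico c1 c2) = ENNReal.ofReal (c2 - c1) := by
    rw [hν, Measure.restrict_apply measurableSet_Ico,
      Set.inter_eq_left.mpr, Real.volume_Ico]
    intro x hx
    rcases hx with ⟨h1, h2⟩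
    constructor
    · have : 0 ≤ c1 := div_nonneg (by linarith) hα0.le
      linarith
    · have : c2 ≤ 1 := by
        rw [hc2, div_le_one hα0]; linarith
      linarith
  have : c2 - c1 = r₁ / α := by
    rw [hc1, hc2]; field_simp; ring
  rw [minerValue]
  norm_num at key hpre ⊢
  rw [key, hval, this, ENNReal.toReal_ofReal (by positivity)]

set_option maxHeartbeats 1000000 in
lemma two_dim (α r₁ r₂ : ℝ) (hr₁ : 0 ≤ r₁) (hr₁' : r₁ < 1 / 2) (hα : 1 / 2 ≤ α)
    (hr₂ : 0 < r₂) (hsum : r₁ + r₂ ≤ 1 / 2) :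
    minerValue 2 (1 / 2) α ![r₁, r₂] 1 = r₂ * (α - r₁) / α ^ 2 := by
  classical
  have hα0 : (0:ℝ) < α := lt_of_lt_of_le (by norm_num) hα
  set ν := volume.restrict (Set.Icc (0:ℝ) 1) with hν
  set a1 := (1/2 - r₁ - r₂)/α with ha1
  set a2 := (1/2 - r₁)/α with ha2
  set b1 := (1/2 - r₂)/α with hb1
  set b2 := (1/2)/α with hb2
  have ha1nn : 0 ≤ a1 := div_nonneg (by linarith) hα0.le
  have ha12 : a1 ≤ a2 := by
    rw [ha1, ha2]; apply div_le_div_of_nonneg_right ?_ hα0.le <;> linarith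
  have ha21 : a2 ≤ 1 := by rw [ha2, div_le_one hα0]; linarith
  have hb1nn : 0 ≤ b1 := div_nonneg (by linarith) hα0.le
  have hb12 : b1 ≤ b2 := by
    rw [hb1, hb2]; apply div_le_div_of_nonneg_right ?_ hα0.le <;> linarith
  have hb21 : b2 ≤ 1 := by rw [hb2, div_le_one hα0]; linarith
  set T : Set (ℝ × ℝ) := {p | (if p.1 < p.2 then r₁ else 0) + α * p.2 < 1/2 ∧
      1/2 ≤ (if p.1 < p.2 then r₁ else 0) + α * p.2 + r₂} with hT
  have hpre : pivotEvent 2 (1/2) α ![r₁, r₂] 1 = MeasurableEquiv.finTwoArrow ⁻¹' T := by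
    ext x
    simp [pivotEvent, hT, Fin.sum_univ_two, lt_self_iff_false,
      MeasurableEquiv.finTwoArrow, MeasurableEquiv.piFinTwo]
  have hf : Measurable fun p : ℝ × ℝ => (if p.1 < p.2 then r₁ else 0) + α * p.2 :=
    (Measurable.ite (measurableSet_lt measurable_fst measurable_snd) measurable_const measurable_const).add
      (measurable_snd.const_mul α)
  have hTm : MeasurableSet T :=
    (measurableSet_lt hf measurable_const).inter
      (measurableSet_le measurable_const (hf.add_const r₂))
  have key : cubeMeasure 2 (pivotEvent 2 (1/2) α ![r₁, r₂] 1) = (ν.prod ν) T := by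
    rw [hpre]
    exact (measurePreserving_finTwoArrow ν).measure_preimage_equiv _
  have hsec : ∀ y : ℝ, ν ((fun x => (x, y)) ⁻¹' T)
      = (Set.Ico a1 a2).indicator (fun y => ENNReal.ofReal y) y
        + (Set.Ico b1 b2).indicator (fun y => ENNReal.ofReal (1 - y)) y := by
    intro y
    have hA : y ∈ Set.Ico a1 a2 ↔ (r₁ + α * y < 1/2 ∧ 1/2 ≤ r₁ + α * y + r₂) := by
      rw [Set.mem_Ico, ha1, ha2, div_le_iff₀ hα0, lt_div_iff₀ hα0]
      constructor <;> rintro ⟨h1, h2⟩ <;> constructor <;> nlinarith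
    have hB : y ∈ Set.Ico b1 b2 ↔ (α * y < 1/2 ∧ 1/2 ≤ α * y + r₂) := by
      rw [Set.mem_Ico, hb1, hb2, div_le_iff₀ hα0, lt_div_iff₀ hα0]
      constructor <;> rintro ⟨h1, h2⟩ <;> constructor <;> nlinarith
    have hset : ((fun x => (x, y)) ⁻¹' T)
        = (if (r₁ + α * y < 1/2 ∧ 1/2 ≤ r₁ + α * y + r₂) then Set.Iio y else ∅)
          ∪ (if (α * y < 1/2 ∧ 1/2 ≤ α * y + r₂) then Set.Ici y else ∅) := by
      ext x
      rw [Set.mem_union]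
      show ((if x < y then r₁ else 0) + α * y < 1/2 ∧
          1/2 ≤ (if x < y then r₁ else 0) + α * y + r₂) ↔ _
      by_cases hxy : x < y
      · rw [if_pos hxy]
        constructor
        · intro h
          left
          rw [if_pos h]
          exact Set.mem_Iio.mpr hxy
        · rintro (h | h)
          · split_ifs at h with hc
            · exact hc
            · exact (Set.notMem_empty x h).elim
          · split_ifs at h with hc
            · exact absurd (Set.mem_Ici.mp h) (not_le.mpr hxy)
            · exact (Set.notMem_empty x h).elim
      · rw [if_neg hxy]
        simp only [zero_add]
        constructor
        · intro h
          right
          rw [if_pos h]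
          exact Set.mem_Ici.mpr (not_lt.mp hxy)
        · rintro (h | h)
          · split_ifs at h with hc
            · exact absurd (Set.mem_Iio.mp h) hxy
            · exact (Set.notMem_empty x h).elim
          · split_ifs at h with hc
            · exact hc
            · exact (Set.notMem_empty x h).elim
    rw [hset, measure_union]
    · congr 1
      · by_cases hA' : (r₁ + α * y < 1/2 ∧ 1/2 ≤ r₁ + α * y + r₂)
        · have hy := hA.mpr hA'
          rw [if_pos hA', Set.indicator_of_mem hy]
          rcases hy with ⟨hy1, hy2⟩
          rw [hν, Measure.restrict_apply measurableSet_Iio]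
          have : Set.Iio y ∩ Set.Icc (0:ℝ) 1 = Set.Ico 0 y := by
            ext z
            simp only [Set.mem_inter_iff, Set.mem_Iio, Set.mem_Icc, Set.mem_Ico]
            constructor
            · rintro ⟨h, h2, _⟩; exact ⟨h2, h⟩
            · rintro ⟨h2, h⟩; exact ⟨h, h2, by nlinarith⟩
          rw [this, Real.volume_Ico, sub_zero]
        · rw [if_neg hA', Set.indicator_of_notMem (fun h => hA' (hA.mp h)), measure_empty]
      · by_cases hB' : (α * y < 1/2 ∧ 1/2 ≤ α * y + r₂)
        · have hy := hB.mpr hB'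
          rw [if_pos hB', Set.indicator_of_mem hy]
          rcases hy with ⟨hy1, hy2⟩
          rw [hν, Measure.restrict_apply measurableSet_Ici]
          have : Set.Ici y ∩ Set.Icc (0:ℝ) 1 = Set.Icc y 1 := by
            ext z
            simp only [Set.mem_inter_iff, Set.mem_Ici, Set.mem_Icc]
            constructor
            · rintro ⟨h, _, h3⟩; exact ⟨h, h3⟩
            · rintro ⟨h, h3⟩; exact ⟨h, by nlinarith, h3⟩
          rw [this, Real.volume_Icc]
        · rw [if_neg hB', Set.indicator_of_notMem (fun h => hB' (hB.mp h)), measure_empty]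
    · apply Set.disjoint_of_subset
      · split_ifs; exacts [le_rfl, Set.empty_subset _]
      · split_ifs; exacts [le_rfl, Set.empty_subset _]
      · exact Set.Iio_disjoint_Ici le_rfl
    · split_ifs; exacts [measurableSet_Ici, MeasurableSet.empty]
  have hintA : ∫⁻ y in Set.Ico a1 a2, ENNReal.ofReal y ∂volume
      = ENNReal.ofReal ((a2^2 - a1^2)/2) := by
    rw [← ofReal_integral_eq_lintegral_ofReal]
    · rw [setIntegral_congr_set Ico_ae_eq_Ioc, ← intervalIntegral.integral_of_le ha12,
        integral_id]
    · exact (continuous_id.integrableOn_Icc).mono_set Set.Ico_subset_Icc_self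
    · exact (ae_restrict_iff' measurableSet_Ico).mpr (ae_of_all _ fun z hz => by
        simp only [Pi.zero_apply]
        exact le_trans ha1nn hz.1)
  have hintB : ∫⁻ y in Set.Ico b1 b2, ENNReal.ofReal (1 - y) ∂volume
      = ENNReal.ofReal ((b2 - b1) - (b2^2 - b1^2)/2) := by
    rw [← ofReal_integral_eq_lintegral_ofReal]
    · rw [setIntegral_congr_set Ico_ae_eq_Ioc, ← intervalIntegral.integral_of_le hb12]
      have : ∫ x in b1..b2, (1 - x) = (b2 - b1) - (b2^2 - b1^2)/2 := by
        rw [intervalIntegral.integral_sub intervalIntegrable_const intervalIntegral.intervalIntegrable_id,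
          integral_id, intervalIntegral.integral_const]
        simp [smul_eq_mul]
      rw [this]
    · exact ((continuous_const.sub continuous_id).integrableOn_Icc).mono_set Set.Ico_subset_Icc_self
    · exact (ae_restrict_iff' measurableSet_Ico).mpr (ae_of_all _ fun z hz => by
        simp only [Pi.zero_apply]
        have := hz.2
        linarith [hb21])
  have hmeas1 : Measurable fun y => (Set.Ico a1 a2).indicator (fun y => ENNReal.ofReal y) y :=
    (ENNReal.measurable_ofReal.comp measurable_id).indicator measurableSet_Ico
  have hrestrA : ν.restrict (Set.Ico a1 a2) = volume.restrict (Set.Ico a1 a2) := by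
    rw [hν, Measure.restrict_restrict measurableSet_Ico, Set.inter_eq_left.mpr]
    intro z hz
    exact ⟨le_trans ha1nn hz.1, le_trans hz.2.le ha21⟩
  have hrestrB : ν.restrict (Set.Ico b1 b2) = volume.restrict (Set.Ico b1 b2) := by
    rw [hν, Measure.restrict_restrict measurableSet_Ico, Set.inter_eq_left.mpr]
    intro z hz
    exact ⟨le_trans hb1nn hz.1, le_trans hz.2.le hb21⟩
  have hmain : (ν.prod ν) T = ENNReal.ofReal ((a2^2 - a1^2)/2)
      + ENNReal.ofReal ((b2 - b1) - (b2^2 - b1^2)/2) := by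
    rw [Measure.prod_apply_symm hTm]
    calc ∫⁻ y, ν ((fun x => (x, y)) ⁻¹' T) ∂ν
        = ∫⁻ y, ((Set.Ico a1 a2).indicator (fun y => ENNReal.ofReal y) y
            + (Set.Ico b1 b2).indicator (fun y => ENNReal.ofReal (1 - y)) y) ∂ν := by
          exact lintegral_congr hsec
      _ = (∫⁻ y, (Set.Ico a1 a2).indicator (fun y => ENNReal.ofReal y) y ∂ν)
          + ∫⁻ y, (Set.Ico b1 b2).indicator (fun y => ENNReal.ofReal (1 - y)) y ∂ν := by
          exact lintegral_add_left hmeas1 _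
      _ = _ := by
          rw [lintegral_indicator measurableSet_Ico, lintegral_indicator measurableSet_Ico,
            hrestrA, hrestrB, hintA, hintB]
  have hAnn : 0 ≤ (a2^2 - a1^2)/2 := by nlinarith
  have hBnn : 0 ≤ (b2 - b1) - (b2^2 - b1^2)/2 := by nlinarith
  have : minerValue 2 (1/2) α ![r₁, r₂] 1
      = (a2^2 - a1^2)/2 + ((b2 - b1) - (b2^2 - b1^2)/2) := by
    rw [minerValue]
    norm_num at key ⊢
    rw [key, hmain, ENNReal.toReal_add ENNReal.ofReal_ne_top ENNReal.ofReal_ne_top,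
      ENNReal.toReal_ofReal hAnn, ENNReal.toReal_ofReal hBnn]
  rw [this, ha2, ha1, hb1, hb2]
  field_simp
  ring

/-- Consistency of the entry theorem at `m = 1`: adding a second miner of weight `r₂ > 0`
to `Γ = [1/2; r₁; α]` with `0 ≤ r₁ < 1/2 ≤ α` and `r₁ + r₂ ≤ 1/2` gives
`φ⁺₂ = r₂(α - r₁)/α²`, hence `φ⁺₂/r₂ = (α - r₁)/α² = Φ/α` with `Φ = (α - r₁)/α`. -/
theorem stmt_11 (α r₁ r₂ : ℝ) (hr₁ : 0 ≤ r₁) (hr₁' : r₁ < 1 / 2) (hα : 1 / 2 ≤ α)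
    (hr₂ : 0 < r₂) (hsum : r₁ + r₂ ≤ 1 / 2) :
    minerValue 2 (1 / 2) α ![r₁, r₂] 1 = r₂ * (α - r₁) / α ^ 2 ∧
    minerValue 2 (1 / 2) α ![r₁, r₂] 1 / r₂ = (α - r₁) / α ^ 2 ∧
    oceanicValue 1 (1 / 2) α (fun _ => r₁) = (α - r₁) / α ∧
    minerValue 2 (1 / 2) α ![r₁, r₂] 1 / r₂ = oceanicValue 1 (1 / 2) α (fun _ => r₁) / α := by
  have hα0 : (0:ℝ) < α := lt_of_lt_of_le (by norm_num) hα
  have h2 := two_dim α r₁ r₂ hr₁ hr₁' hα hr₂ hsum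
  have h1 := one_dim α r₁ hr₁ hr₁' hα
  have hΦ : oceanicValue 1 (1 / 2) α (fun _ => r₁) = (α - r₁) / α := by
    rw [oceanicValue, Fin.sum_univ_one, h1]
    field_simp
  refine ⟨h2, ?_, hΦ, ?_⟩
  · rw [h2]
    field_simp
  · rw [h2, hΦ]
    field_simp
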